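/- arXiv:1812.10042 — 4 statements merged into one kernel-verified Lean document; each statement's English description precedes it below -/
import Mathlib

section
/- If X has the xgamma distribution with parameter θ > 0, then E[X] = (θ+3)/(θ(1+θ)). -/
open MeasureTheory Real

lemma xg_int (θ : ℝ) (hθ : 0 < θ) (s : ℝ) (hs : -1 < s) :
    IntegrableOn (fun x : ℝ => x ^ s * Real.exp (-θ * x)) (Set.Ioi 0) := by
  have := integrableOn_rpow_mul_exp_neg_mul_rpow (p := 1) hs one_pos hθ
  refine this.congr_fun (fun x hx => ?_) measurableSet_Ioi
  simp only [Real.rpow_one]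

lemma xg_val (θ : ℝ) (hθ : 0 < θ) (a : ℝ) (ha : 0 < a) :
    ∫ x in Set.Ioi (0:ℝ), x ^ (a - 1) * Real.exp (-θ * x)
      = (1 / θ) ^ a * Real.Gamma a := by
  rw [← integral_rpow_mul_exp_neg_mul_Ioi ha hθ]
  refine setIntegral_congr_fun measurableSet_Ioi (fun x hx => by rw [neg_mul])

theorem xgamma_mean (θ : ℝ) (hθ : 0 < θ) :
    ∫ x in Set.Ioi (0:ℝ), x * ((θ^2 / (1 + θ)) * (1 + (θ/2) * x^2) * Real.exp (-θ * x)) =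
      (θ + 3) / (θ * (1 + θ)) := by
  have h1θ : (0:ℝ) < 1 + θ := by linarith
  have hI1 := xg_int θ hθ 1 (by norm_num)
  have hI3 := xg_int θ hθ 3 (by norm_num)
  have hv1 := xg_val θ hθ 2 (by norm_num)
  have hv3 := xg_val θ hθ 4 (by norm_num)
  rw [Real.Gamma_two] at hv1
  have hg4 : Real.Gamma 4 = 6 := by
    rw [show (4:ℝ) = 3 + 1 by norm_num, Real.Gamma_add_one (by norm_num),
      show (3:ℝ) = 2 + 1 by norm_num, Real.Gamma_add_one (by norm_num), Real.Gamma_two]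
    norm_num
  rw [hg4] at hv3
  have key : ∀ x ∈ Set.Ioi (0:ℝ),
      x * ((θ^2 / (1 + θ)) * (1 + (θ/2) * x^2) * Real.exp (-θ * x))
        = (θ^2 / (1 + θ)) * (x ^ (1:ℝ) * Real.exp (-θ * x))
          + (θ^3 / (2*(1 + θ))) * (x ^ (3:ℝ) * Real.exp (-θ * x)) := by
    intro x hx
    have hx' : (0:ℝ) < x := hx
    rw [Real.rpow_one, show (3:ℝ) = ((3:ℕ):ℝ) by norm_num, Real.rpow_natCast]
    field_simp
  rw [setIntegral_congr_fun measurableSet_Ioi key,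
    integral_add ((hI1.const_mul _)) ((hI3.const_mul _)),
    integral_const_mul, integral_const_mul]
  norm_num [neg_mul] at hv1 hv3 ⊢
  rw [hv1, hv3]
  field_simp
  ring
end

section
/- If X has the xgamma distribution with parameter θ > 0, then Var(X) = (θ² + 8θ + 3)/(θ²(1+θ)²). -/
open MeasureTheory Real

lemma xg_integrable (θ : ℝ) (hθ : 0 < θ) (n : ℕ) :
    IntegrableOn (fun x : ℝ => x ^ n * Real.exp (-θ * x)) (Set.Ioi 0) := by
  have h := integrableOn_rpow_mul_exp_neg_mul_rpow
    (s := (n : ℝ)) (p := 1) (b := θ) (by exact_mod_cast neg_one_lt_zero.trans_le (Nat.cast_nonneg n)) one_pos hθ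
  refine h.congr_fun (fun x hx => ?_) measurableSet_Ioi
  beta_reduce
  rw [Real.rpow_natCast, Real.rpow_one]

lemma xg_integral (θ : ℝ) (hθ : 0 < θ) (n : ℕ) :
    ∫ x in Set.Ioi (0:ℝ), x ^ n * Real.exp (-θ * x) = (Nat.factorial n : ℝ) / θ ^ (n + 1) := by
  have h := integral_rpow_mul_exp_neg_mul_Ioi (a := (n : ℝ) + 1) (r := θ)
    (by positivity) hθ
  have heq : ∫ t in Set.Ioi (0:ℝ), t ^ ((n:ℝ) + 1 - 1) * Real.exp (-(θ * t))
      = ∫ x in Set.Ioi (0:ℝ), x ^ n * Real.exp (-θ * x) := by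
    refine setIntegral_congr_fun measurableSet_Ioi (fun x hx => ?_)
    rw [add_sub_cancel_right, Real.rpow_natCast, neg_mul]
  rw [heq] at h
  rw [h]
  rw [show ((n:ℝ) + 1) = ((n + 1 : ℕ) : ℝ) by push_cast; ring, Real.rpow_natCast]
  push_cast
  rw [Real.Gamma_nat_eq_factorial, div_pow, one_pow]
  field_simp

theorem xgamma_variance (θ : ℝ) (hθ : 0 < θ) :
    (∫ x in Set.Ioi (0:ℝ), x^2 * ((θ^2 / (1 + θ)) * (1 + (θ/2) * x^2) * Real.exp (-θ * x))) -
      (∫ x in Set.Ioi (0:ℝ), x * ((θ^2 / (1 + θ)) * (1 + (θ/2) * x^2) * Real.exp (-θ * x)))^2 =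
      (θ^2 + 8*θ + 3) / (θ^2 * (1 + θ)^2) := by
  set c := θ^2 / (1 + θ) with hc
  set d := θ / 2 with hd
  have key : ∀ k : ℕ, (∫ x in Set.Ioi (0:ℝ),
      x ^ k * (c * (1 + d * x^2) * Real.exp (-θ * x)))
      = c * ((Nat.factorial k : ℝ) / θ ^ (k + 1)) + (c * d) * ((Nat.factorial (k+2) : ℝ) / θ ^ (k + 3)) := by
    intro k
    have heq : ∀ x ∈ Set.Ioi (0:ℝ),
        x ^ k * (c * (1 + d * x^2) * Real.exp (-θ * x))
        = c * (x ^ k * Real.exp (-θ * x)) + (c * d) * (x ^ (k+2) * Real.exp (-θ * x)) := by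
      intro x hx; ring
    rw [setIntegral_congr_fun measurableSet_Ioi heq,
      integral_add ((xg_integrable θ hθ k).const_mul c)
        ((xg_integrable θ hθ (k+2)).const_mul (c * d)),
      integral_const_mul, integral_const_mul, xg_integral θ hθ k, xg_integral θ hθ (k+2)]
  have e1 : (∫ x in Set.Ioi (0:ℝ), x * (c * (1 + d * x^2) * Real.exp (-θ * x)))
      = ∫ x in Set.Ioi (0:ℝ), x ^ 1 * (c * (1 + d * x^2) * Real.exp (-θ * x)) := by
    norm_num
  rw [e1, key 1, key 2, hc, hd]
  norm_num [Nat.factorial]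
  have h1θ : (1:ℝ) + θ ≠ 0 := by positivity
  have hθ' : θ ≠ 0 := ne_of_gt hθ
  field_simp
  ring
end

section
/- If X is xgamma distributed with parameter θ > 0, then E[e^{tX}] = (θ²/(1+θ))·(1/(θ−t) + θ/(θ−t)³) for all t < θ. -/
open MeasureTheory Real

lemma int_exp (s : ℝ) (hs : 0 < s) :
    ∫ x in Set.Ioi (0:ℝ), Real.exp (-(s * x)) = 1 / s := by
  have := integral_rpow_mul_exp_neg_mul_Ioi (a := 1) (r := s) one_pos hs
  simpa [Real.Gamma_one] using this

lemma int_sq_exp (s : ℝ) (hs : 0 < s) :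
    ∫ x in Set.Ioi (0:ℝ), x ^ 2 * Real.exp (-(s * x)) = 2 / s ^ 3 := by
  have h := integral_rpow_mul_exp_neg_mul_Ioi (a := 3) (r := s) (by norm_num) hs
  have hg : Real.Gamma 3 = 2 := by
    rw [show (3:ℝ) = (2:ℕ) + 1 by norm_num, Real.Gamma_nat_eq_factorial]
    norm_num
  have heq : ∫ x in Set.Ioi (0:ℝ), x ^ 2 * Real.exp (-(s * x)) =
      ∫ x in Set.Ioi (0:ℝ), x ^ ((3:ℝ) - 1) * Real.exp (-(s * x)) := by
    refine setIntegral_congr_fun measurableSet_Ioi (fun x hx => ?_)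
    rw [show (3:ℝ) - 1 = 2 by norm_num, Real.rpow_two]
  rw [heq, h, hg, show (3:ℝ) = ((3:ℕ):ℝ) by norm_num, Real.rpow_natCast, div_pow, one_pow]
  field_simp

theorem xgamma_mgf (θ t : ℝ) (hθ : 0 < θ) (ht : t < θ) :
    ∫ x in Set.Ioi (0:ℝ),
        Real.exp (t * x) * ((θ^2 / (1 + θ)) * (1 + (θ/2) * x^2) * Real.exp (-θ * x)) =
      (θ^2 / (1 + θ)) * (1 / (θ - t) + θ / (θ - t)^3) := by
  set s := θ - t with hsdef
  have hs : 0 < s := sub_pos.mpr ht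
  have key : ∀ x : ℝ,
      Real.exp (t * x) * ((θ^2 / (1 + θ)) * (1 + (θ/2) * x^2) * Real.exp (-θ * x)) =
      (θ^2 / (1 + θ)) * Real.exp (-(s * x)) +
      (θ^2 / (1 + θ)) * (θ/2) * (x ^ 2 * Real.exp (-(s * x))) := by
    intro x
    have he : Real.exp (-(s * x)) = Real.exp (t * x) * Real.exp (-θ * x) := by
      rw [← Real.exp_add]; congr 1; rw [hsdef]; ring
    rw [he]; ring
  rw [setIntegral_congr_fun (measurableSet_Ioi) (fun x _ => key x)]
  have hi1 : IntegrableOn (fun x => Real.exp (-(s * x))) (Set.Ioi (0:ℝ)) := by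
    simpa [neg_mul] using exp_neg_integrableOn_Ioi 0 hs
  have hi2 : IntegrableOn (fun x => x ^ 2 * Real.exp (-(s * x))) (Set.Ioi (0:ℝ)) := by
    have := integrableOn_rpow_mul_exp_neg_mul_rpow (p := 1) (s := 2) (b := s)
      (by norm_num) one_pos hs
    refine this.congr_fun (fun x hx => ?_) measurableSet_Ioi
    dsimp only; rw [Real.rpow_two, Real.rpow_one, neg_mul]
  rw [integral_add (hi1.const_mul _) (hi2.const_mul _), integral_const_mul,
    integral_const_mul, int_exp s hs, int_sq_exp s hs]
  field_simp
end

section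
/- If X is xgamma distributed with parameter θ > 0, then E[X²] = 2(θ+6)/(θ²(1+θ)). -/
open MeasureTheory Real

lemma my_integrable (n : ℕ) {θ : ℝ} (hθ : 0 < θ) :
    IntegrableOn (fun x : ℝ => x ^ n * Real.exp (-θ * x)) (Set.Ioi 0) := by
  have h := integrableOn_rpow_mul_exp_neg_mul_rpow (p := 1) (s := (n : ℝ)) (b := θ)
    (by exact_mod_cast (by norm_num : (-1:ℝ) < 0).trans_le (Nat.cast_nonneg n)) one_pos hθ
  refine h.congr_fun (fun x hx => ?_) measurableSet_Ioi
  simp only [Real.rpow_one, Real.rpow_natCast]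

lemma my_integral (n : ℕ) {θ : ℝ} (hθ : 0 < θ) :
    ∫ x in Set.Ioi (0:ℝ), x ^ n * Real.exp (-θ * x) = n.factorial / θ ^ (n + 1) := by
  have h := integral_rpow_mul_exp_neg_mul_Ioi (a := (n : ℝ) + 1) (r := θ) (by positivity) hθ
  rw [show ((n : ℝ) + 1 - 1) = (n : ℝ) by ring] at h
  have hcong : ∫ x in Set.Ioi (0:ℝ), x ^ (n : ℝ) * Real.exp (-(θ * x)) =
      ∫ x in Set.Ioi (0:ℝ), x ^ n * Real.exp (-θ * x) := by
    refine setIntegral_congr_fun measurableSet_Ioi (fun x hx => ?_)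
    rw [Real.rpow_natCast, neg_mul]
  rw [hcong] at h
  rw [h, show ((n : ℝ) + 1) = ((n + 1 : ℕ) : ℝ) by push_cast; ring,
    Real.rpow_natCast]
  push_cast
  rw [Real.Gamma_nat_eq_factorial]
  field_simp
  rw [← mul_pow, one_div_mul_cancel hθ.ne', one_pow]

theorem xgamma_second_moment (θ : ℝ) (hθ : 0 < θ) :
    ∫ x in Set.Ioi (0:ℝ), x^2 * ((θ^2 / (1 + θ)) * (1 + (θ/2) * x^2) * Real.exp (-θ * x)) =
      2 * (θ + 6) / (θ^2 * (1 + θ)) := by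
  have h1 : 0 < 1 + θ := by linarith
  have key : ∀ x : ℝ, x^2 * ((θ^2 / (1 + θ)) * (1 + (θ/2) * x^2) * Real.exp (-θ * x)) =
      (θ^2 / (1 + θ)) * (x^2 * Real.exp (-θ * x)) +
      (θ^3 / (2 * (1 + θ))) * (x^4 * Real.exp (-θ * x)) := by
    intro x
    have h2 : (2:ℝ) * (1 + θ) ≠ 0 := by positivity
    field_simp
  simp_rw [key]
  rw [integral_add (((my_integrable 2 hθ).const_mul _)) ((my_integrable 4 hθ).const_mul _),
    integral_const_mul, integral_const_mul, my_integral 2 hθ, my_integral 4 hθ]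
  norm_num [Nat.factorial]
  field_simp
  ring
end
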